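/- Let $k\ge 2$, $n=k+1$, and let $\mu$ be a regular cardinal with $\mu^{<\theta}=\mu$, and $\lambda=\mu^{+k}$. If $\operatorname{Pr}_{n,k}(\lambda,\mu,\aleph_0)$ holds, then $\operatorname{Pr}_{n,k}(\lambda,\mu,\theta)$ holds. That is, a coloring of finite subsets of $\lambda$ witnessing the covering property can be upgraded to a coloring of all subsets of size $<\theta$. -/

import Mathlib

open Cardinal

universe u

/-- `Pr_{n,k}(λ,μ,θ)`. -/
def Pr (n k : ℕ) (lam mu th : Cardinal.{u}) : Prop :=
  ∃ G : Set Ordinal → Ordinal, (∀ u : Set Ordinal, G u < mu.ord) ∧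
    ∀ w : Finset Ordinal.{u}, (∀ a ∈ w, a < lam.ord) → w.card = n →
      ∀ u : Finset Ordinal → Set Ordinal,
        (∀ v ⊆ w, v.card = k →
          ↑v ⊆ u v ∧ u v ⊆ Set.Iio lam.ord ∧ Cardinal.mk (u v) < Cardinal.lift.{u+1} th) →
        (∀ v₁ ⊆ w, ∀ v₂ ⊆ w, v₁.card = k → v₂.card = k → G (u v₁) = G (u v₂)) →
        ∃ v ⊆ w, v.card = k ∧ ↑w ⊆ u v

namespace Stmt6Aux

open Ordinal Set

variable {o : Ordinal.{u}} {s : Set Ordinal.{u}}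

instance iwo (o : Ordinal.{u}) : IsWellOrder o.ToType (· < ·) := isWellOrder_lt

/-- Transfer of `s` to a subset of `o.ToType`. -/
def sub (o : Ordinal.{u}) (s : Set Ordinal.{u}) : Set o.ToType :=
  {b | (((Ordinal.ToType.mk (o := o)).symm b : Set.Iio o) : Ordinal.{u}) ∈ s}

/-- The subrelation. -/
def rel (o : Ordinal.{u}) (s : Set Ordinal.{u}) : sub o s → sub o s → Prop :=
  Subrel ((· < ·) : o.ToType → o.ToType → Prop) (sub o s)

instance iwo2 (o : Ordinal.{u}) (s : Set Ordinal.{u}) : IsWellOrder (sub o s) (rel o s) :=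
  RelEmbedding.isWellOrder (Subrel.relEmbedding _ _)

/-- Order type of `s ∩ Iio o`, as an ordinal in the same universe. -/
noncomputable def otp (o : Ordinal.{u}) (s : Set Ordinal.{u}) : Ordinal.{u} :=
  Ordinal.type (rel o s)

lemma mem_sub {x : Ordinal.{u}} (h1 : x < o) (h2 : x ∈ s) :
    (Ordinal.ToType.mk (o := o)) ⟨x, h1⟩ ∈ sub o s := by
  simpa [sub] using h2

open scoped Classical in
/-- The collapsing function. -/
noncomputable def col (o : Ordinal.{u}) (s : Set Ordinal.{u}) (x : Ordinal.{u}) : Ordinal.{u} :=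
  if h : x < o ∧ x ∈ s then
    Ordinal.typein (rel o s) ⟨(Ordinal.ToType.mk (o := o)) ⟨x, h.1⟩, mem_sub h.1 h.2⟩
  else 0

lemma col_lt_otp {x : Ordinal.{u}} (h1 : x < o) (h2 : x ∈ s) : col o s x < otp o s := by
  rw [col, dif_pos (⟨h1, h2⟩ : x < o ∧ x ∈ s)]
  exact Ordinal.typein_lt_type _ _

lemma col_inj {x y : Ordinal.{u}} (hx1 : x < o) (hx2 : x ∈ s) (hy1 : y < o) (hy2 : y ∈ s)
    (h : col o s x = col o s y) : x = y := by
  simp only [col] at h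
  rw [dif_pos (⟨hx1, hx2⟩ : x < o ∧ x ∈ s), dif_pos (⟨hy1, hy2⟩ : y < o ∧ y ∈ s)] at h
  have h2 := Ordinal.typein_injective _ h
  have h3 : (Ordinal.ToType.mk (o := o)) ⟨x, hx1⟩ = (Ordinal.ToType.mk (o := o)) ⟨y, hy1⟩ := congrArg Subtype.val h2
  have h4 := (Ordinal.ToType.mk (o := o)).injective h3
  exact congrArg Subtype.val h4

lemma col_surj {b : Ordinal.{u}} (hb : b < otp o s) : ∃ x, x < o ∧ x ∈ s ∧ col o s x = b := by
  obtain ⟨a, ha⟩ := Ordinal.typein_surj (rel o s) hb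
  refine ⟨(((Ordinal.ToType.mk (o := o)).symm a.1 : Set.Iio o) : Ordinal.{u}),
    ((Ordinal.ToType.mk (o := o)).symm a.1).2, a.2, ?_⟩
  rw [col, dif_pos]
  · rw [← ha]
    congr 1
    ext
    exact (Ordinal.ToType.mk (o := o)).apply_symm_apply _
  · exact ⟨((Ordinal.ToType.mk (o := o)).symm a.1).2, a.2⟩

end Stmt6Aux

namespace Stmt6Aux
open Ordinal Set

variable {o : Ordinal.{u}} {s : Set Ordinal.{u}}

/-- `sub o s` is equipotent with `s` when `s ⊆ Iio o`. -/
lemma mk_sub (hso : s ⊆ Set.Iio o) : Cardinal.lift.{u+1} #(sub o s) = #s := by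
  have e : sub o s ≃ s :=
    { toFun := fun b => ⟨(((Ordinal.ToType.mk (o := o)).symm b.1 : Set.Iio o) : Ordinal.{u}), b.2⟩
      invFun := fun x => ⟨(Ordinal.ToType.mk (o := o)) ⟨x.1, hso x.2⟩, mem_sub (hso x.2) x.2⟩
      left_inv := by
        rintro ⟨b, hb⟩
        ext
        simp
      right_inv := by
        rintro ⟨x, hx⟩
        simp }
  have h := Cardinal.lift_mk_eq'.mpr ⟨e⟩
  rwa [Cardinal.lift_id'.{u, u+1} #↥s] at h

lemma otp_lt {th : Cardinal.{u}} (hso : s ⊆ Set.Iio o)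
    (hs : #s < Cardinal.lift.{u+1} th) : otp o s < th.ord := by
  rw [Cardinal.lt_ord, otp, Ordinal.card_type]
  rw [← mk_sub hso] at hs
  exact Cardinal.lift_lt.mp hs

/-- The induced coloring on finite sets of collapsed ordinals. -/
noncomputable def gfun (G₀ : Set Ordinal.{u} → Ordinal.{u}) (o : Ordinal.{u})
    (s : Set Ordinal.{u}) (t : Finset Ordinal.{u}) : Ordinal.{u} :=
  G₀ {x | x < o ∧ x ∈ s ∧ col o s x ∈ t}

open scoped Classical in
lemma gfun_filter (G₀ : Set Ordinal.{u} → Ordinal.{u}) (t : Finset Ordinal.{u}) :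
    gfun G₀ o s t = gfun G₀ o s (t.filter (· < otp o s)) := by
  unfold gfun
  congr 1
  ext x
  simp only [Set.mem_setOf_eq, Finset.mem_filter]
  exact ⟨fun ⟨h1, h2, h3⟩ => ⟨h1, h2, h3, col_lt_otp h1 h2⟩,
    fun ⟨h1, h2, h3, _⟩ => ⟨h1, h2, h3⟩⟩

lemma mk_finset_lt {X : Type v} {c : Cardinal.{v}} (hX : #X < c) (hc : ℵ₀ < c) :
    #(Finset X) < c := by
  cases finite_or_infinite X with
  | inl h =>
    haveI := Fintype.ofFinite X
    exact lt_of_lt_of_le (Cardinal.lt_aleph0_of_finite _) hc.le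
  | inr h => rwa [Cardinal.mk_finset_of_infinite]

end Stmt6Aux

namespace Stmt6Aux
open Ordinal Set

open scoped Classical in
theorem mk_codes_le (mu th : Cardinal.{u}) (hmu : ℵ₀ ≤ mu) (hth : ℵ₀ < th)
    (hthmu : th ≤ mu) (hpow : mu ^< th = mu) :
    #{p : Ordinal.{u} × (Finset Ordinal.{u} → Ordinal.{u}) |
      p.1 < th.ord ∧ (∀ t, p.2 t < mu.ord) ∧ ∀ t, p.2 t = p.2 (t.filter (· < p.1))}
      ≤ Cardinal.lift.{u+1} mu := by
  set S : Set (Ordinal.{u} × (Finset Ordinal.{u} → Ordinal.{u})) :=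
    {p | p.1 < th.ord ∧ (∀ t, p.2 t < mu.ord) ∧ ∀ t, p.2 t = p.2 (t.filter (· < p.1))} with hS
  have hsub : S ⊆ ⋃ (α : Set.Iio th.ord), {p ∈ S | p.1 = (α : Ordinal.{u})} := by
    intro p hp
    exact Set.mem_iUnion.mpr ⟨⟨p.1, hp.1⟩, hp, rfl⟩
  have hfiber : ∀ α : Set.Iio th.ord,
      #{p ∈ S | p.1 = (α : Ordinal.{u})} ≤ Cardinal.lift.{u+1} mu := by
    rintro ⟨α, hα⟩
    have hinj : #{p ∈ S | p.1 = (α : Ordinal.{u})} ≤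
        #(Finset {x : Ordinal.{u} // x < α} → {y : Ordinal.{u} // y < mu.ord}) := by
      refine Cardinal.mk_le_of_injective (f := fun p t =>
        ⟨p.1.2 (t.map (Function.Embedding.subtype _)), by
          obtain ⟨⟨-, h2, -⟩, -⟩ := p.2
          exact h2 _⟩) ?_
      intro a b hfg
      have hpα : a.1.1 = α := a.2.2
      have hqα : b.1.1 = α := b.2.2
      have hp3 : ∀ t, a.1.2 t = a.1.2 (t.filter (· < a.1.1)) := a.2.1.2.2
      have hq3 : ∀ t, b.1.2 t = b.1.2 (t.filter (· < b.1.1)) := b.2.1.2.2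
      apply Subtype.ext
      refine Prod.ext (hpα.trans hqα.symm) ?_
      funext t
      have hmap : t.filter (· < α) =
          (t.subtype (· < α)).map (Function.Embedding.subtype _) :=
        (Finset.subtype_map _).symm
      have hp' : a.1.2 t = a.1.2 ((t.subtype (· < α)).map (Function.Embedding.subtype _)) := by
        rw [← hmap]
        have := hp3 t
        rwa [hpα] at this
      have hq' : b.1.2 t = b.1.2 ((t.subtype (· < α)).map (Function.Embedding.subtype _)) := by
        rw [← hmap]
        have := hq3 t
        rwa [hqα] at this
      have hfg' := congrFun hfg (t.subtype (· < α))
      rw [hp', hq']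
      exact congrArg Subtype.val hfg'
    have h1 : #{y : Ordinal.{u} // y < mu.ord} = Cardinal.lift.{u+1} mu := by
      have h := Ordinal.mk_Iio_ordinal mu.ord
      rw [Cardinal.card_ord] at h
      exact h
    have h2 : #(Finset {x : Ordinal.{u} // x < α}) < Cardinal.lift.{u+1} th := by
      apply mk_finset_lt
      · have h := Ordinal.mk_Iio_ordinal α
        rw [show #{x : Ordinal.{u} // x < α} = #(Set.Iio α) from rfl, h]
        exact Cardinal.lift_lt.mpr (Cardinal.lt_ord.mp hα)
      · exact Cardinal.aleph0_lt_lift.{u,u+1}.mpr hth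
    have h3 : #(Finset {x : Ordinal.{u} // x < α} → {y : Ordinal.{u} // y < mu.ord}) =
        Cardinal.lift.{u+1} mu ^ #(Finset {x : Ordinal.{u} // x < α}) := by
      rw [← Cardinal.power_def, h1]
    obtain ⟨c', hc', hcc⟩ := Cardinal.lt_lift_iff.mp h2
    refine hinj.trans ?_
    rw [h3, ← hcc, ← Cardinal.lift_power]
    exact Cardinal.lift_le.mpr ((Cardinal.le_powerlt mu hc').trans hpow.le)
  calc #S ≤ #(⋃ (α : Set.Iio th.ord), {p ∈ S | p.1 = (α : Ordinal.{u})}) :=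
        Cardinal.mk_le_mk_of_subset hsub
    _ ≤ Cardinal.sum (fun α : Set.Iio th.ord => #{p ∈ S | p.1 = (α : Ordinal.{u})}) :=
        Cardinal.mk_iUnion_le_sum_mk
    _ ≤ Cardinal.sum (fun _ : Set.Iio th.ord => Cardinal.lift.{u+1} mu) :=
        Cardinal.sum_le_sum _ _ hfiber
    _ = #(Set.Iio th.ord) * Cardinal.lift.{u+1} mu := Cardinal.sum_const' _ _
    _ = Cardinal.lift.{u+1} th * Cardinal.lift.{u+1} mu := by
        rw [Ordinal.mk_Iio_ordinal, Cardinal.card_ord]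
    _ ≤ Cardinal.lift.{u+1} mu * Cardinal.lift.{u+1} mu :=
        mul_le_mul_left (Cardinal.lift_le.mpr hthmu) _
    _ = Cardinal.lift.{u+1} mu := Cardinal.mul_eq_self (Cardinal.aleph0_le_lift.{u,u+1}.mpr hmu)

end Stmt6Aux

/-- Claim 2.3 (main direction): for `k ≥ 2`, `n = k+1`, `μ` regular with
`μ^{<θ} = μ` and `λ = μ^{+k}`, `Pr_{n,k}(λ,μ,ℵ₀)` implies `Pr_{n,k}(λ,μ,θ)`. -/
theorem stmt6 (k : ℕ) (hk : 2 ≤ k) (mu th lam : Cardinal)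
    (hreg : mu.IsRegular) (hpow : mu ^< th = mu)
    (hlam : lam = (Order.succ)^[k] mu)
    (h : Pr (k + 1) k lam mu ℵ₀) : Pr (k + 1) k lam mu th := by
  classical
  obtain ⟨G₀, hG₀, hmain⟩ := h
  rcases le_or_gt th ℵ₀ with hth | hth
  · -- if `θ ≤ ℵ₀`, the old coloring works as is
    refine ⟨G₀, hG₀, fun w hw hc u hu hconst => ?_⟩
    refine hmain w hw hc u (fun v hv hk' => ?_) hconst
    obtain ⟨h1, h2, h3⟩ := hu v hv hk'
    exact ⟨h1, h2, h3.trans_le (Cardinal.lift_le.mpr hth)⟩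
  · -- main case : `θ > ℵ₀`
    have hmu : ℵ₀ ≤ mu := hreg.aleph0_le
    have hthmu : th ≤ mu := by
      by_contra hlt
      push_neg at hlt
      have h1 : mu ^ mu ≤ mu ^< th := Cardinal.le_powerlt mu hlt
      rw [hpow, Cardinal.power_self_eq hmu] at h1
      exact absurd h1 (Cardinal.cantor mu).not_ge
    set o := lam.ord with ho
    set S : Set (Ordinal × (Finset Ordinal → Ordinal)) :=
      {p | p.1 < th.ord ∧ (∀ t, p.2 t < mu.ord) ∧ ∀ t, p.2 t = p.2 (t.filter (· < p.1))}
      with hSdef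
    have hcard : #S ≤ #(Set.Iio mu.ord) := by
      rw [Ordinal.mk_Iio_ordinal, Cardinal.card_ord]
      exact Stmt6Aux.mk_codes_le mu th hmu hth hthmu hpow
    obtain ⟨J⟩ := (Cardinal.le_def _ _).mp hcard
    refine ⟨fun s => if hs : (Stmt6Aux.otp o s, Stmt6Aux.gfun G₀ o s) ∈ S
        then (J ⟨_, hs⟩ : Set.Iio mu.ord) else 0, ?_, ?_⟩
    · intro s
      dsimp only
      split
      · exact (J ⟨_, ‹_›⟩).2
      · rw [Cardinal.lt_ord, Ordinal.card_zero]
        exact Cardinal.aleph0_pos.trans_le hmu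
    · intro w hw hcardw u hu hG
      have hmem : ∀ v, v ⊆ w → v.card = k →
          (Stmt6Aux.otp o (u v), Stmt6Aux.gfun G₀ o (u v)) ∈ S := by
        intro v hv hkv
        obtain ⟨h1, h2, h3⟩ := hu v hv hkv
        exact ⟨Stmt6Aux.otp_lt h2 h3, fun t => hG₀ _, fun t => Stmt6Aux.gfun_filter G₀ t⟩
      have hinv : ∀ v₁, v₁ ⊆ w → ∀ v₂, v₂ ⊆ w → v₁.card = k → v₂.card = k →
          (Stmt6Aux.otp o (u v₁), Stmt6Aux.gfun G₀ o (u v₁))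
          = (Stmt6Aux.otp o (u v₂), Stmt6Aux.gfun G₀ o (u v₂)) := by
        intro v₁ h1 v₂ h2 hk1 hk2
        have hGe := hG v₁ h1 v₂ h2 hk1 hk2
        simp only [dif_pos (hmem v₁ h1 hk1), dif_pos (hmem v₂ h2 hk2)] at hGe
        have := J.injective (Subtype.ext hGe)
        exact congrArg Subtype.val this
      set F : Finset Ordinal := (w.powersetCard k).biUnion
        (fun v => v.image (Stmt6Aux.col o (u v))) with hF
      set U : Finset Ordinal → Set Ordinal :=
        fun v => {x | x < o ∧ x ∈ u v ∧ Stmt6Aux.col o (u v) x ∈ F} with hU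
      have hGconst : ∀ v₁ ⊆ w, ∀ v₂ ⊆ w, v₁.card = k → v₂.card = k →
          G₀ (U v₁) = G₀ (U v₂) := by
        intro v₁ h1 v₂ h2 hk1 hk2
        have hi := hinv v₁ h1 v₂ h2 hk1 hk2
        have hg : Stmt6Aux.gfun G₀ o (u v₁) = Stmt6Aux.gfun G₀ o (u v₂) :=
          congrArg Prod.snd hi
        have e1 : G₀ (U v₁) = Stmt6Aux.gfun G₀ o (u v₁) F := rfl
        have e2 : G₀ (U v₂) = Stmt6Aux.gfun G₀ o (u v₂) F := rfl
        rw [e1, e2, hg]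
      refine (hmain w hw hcardw U (fun v hv hkv => ⟨?_, ?_, ?_⟩) hGconst).imp
        (fun v hv => ⟨hv.1, hv.2.1, fun x hx => (hv.2.2 hx).2.1⟩)
      · intro x hx
        have hxv : x ∈ v := hx
        have hxw : x ∈ w := hv hxv
        obtain ⟨h1, h2, h3⟩ := hu v hv hkv
        refine ⟨hw x hxw, h1 hx, ?_⟩
        rw [hF]
        exact Finset.mem_biUnion.mpr
          ⟨v, Finset.mem_powersetCard.mpr ⟨hv, hkv⟩, Finset.mem_image_of_mem _ hxv⟩
      · intro x hx
        exact hx.1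
      · rw [Cardinal.lift_aleph0, Cardinal.lt_aleph0_iff_set_finite]
        apply Set.Finite.of_finite_image (f := Stmt6Aux.col o (u v))
        · apply Set.Finite.subset (F : Finset Ordinal).finite_toSet
          rintro y ⟨x, hx, rfl⟩
          exact hx.2.2
        · intro x hx y hy hxy
          exact Stmt6Aux.col_inj hx.1 hx.2.1 hy.1 hy.2.1 hxy
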